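/- Let σ, σ′ ∈ S_n with r_i(σ′) = r_i(σ) + 1 for a single index i_0 and r_i(σ′) = r_i(σ) for all i ≠ i_0 (so inv(σ′) = inv(σ) + 1). Then σ′ is obtained from σ by swapping the values σ(i_0) and σ(j_0), where σ(j_0) = min{σ(j) : j > i_0, σ(j) > σ(i_0)}. -/

import Mathlib

open Finset

/-- Right-inversion count: `r_i(σ) = #{j > i : σ(j) < σ(i)}`. -/
def rCount {n : ℕ} (σ : Equiv.Perm (Fin n)) (i : Fin n) : ℕ :=
  (Finset.univ.filter (fun j : Fin n => i < j ∧ σ j < σ i)).card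

def lCount {n : ℕ} (σ : Equiv.Perm (Fin n)) (i : Fin n) : ℕ :=
  (Finset.univ.filter (fun j : Fin n => j < i ∧ σ j < σ i)).card

lemma key_identity {n : ℕ} (σ : Equiv.Perm (Fin n)) (i : Fin n) :
    (σ i : ℕ) = lCount σ i + rCount σ i := by
  have h0 : (Finset.univ.filter (fun j : Fin n => σ j < σ i)).card = (σ i : ℕ) := by
    have : (Finset.univ.filter (fun j : Fin n => σ j < σ i)).card
        = (Finset.Iio (σ i)).card := by
      apply Finset.card_bij (fun j _ => σ j)
      · intro a ha; simp only [mem_filter, mem_univ, true_and] at ha; simpa using ha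
      · intro a _ b _ h; exact σ.injective h
      · intro b hb
        refine ⟨σ.symm b, ?_, by simp⟩
        simp only [mem_filter, mem_univ, true_and, Equiv.apply_symm_apply]
        simpa using hb
    rw [this, Fin.card_Iio]
  have hsplit : Finset.univ.filter (fun j : Fin n => σ j < σ i)
      = Finset.univ.filter (fun j : Fin n => j < i ∧ σ j < σ i)
        ∪ Finset.univ.filter (fun j : Fin n => i < j ∧ σ j < σ i) := by
    ext j
    simp only [mem_filter, mem_univ, true_and, mem_union]
    constructor
    · intro h
      rcases lt_trichotomy j i with hj | hj | hj
      · exact Or.inl ⟨hj, h⟩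
      · subst hj; exact absurd h (lt_irrefl _)
      · exact Or.inr ⟨hj, h⟩
    · rintro (⟨_, h⟩ | ⟨_, h⟩) <;> exact h
  have hdisj : Disjoint (Finset.univ.filter (fun j : Fin n => j < i ∧ σ j < σ i))
      (Finset.univ.filter (fun j : Fin n => i < j ∧ σ j < σ i)) := by
    rw [Finset.disjoint_filter]
    rintro j _ ⟨hj, _⟩ ⟨hj', _⟩
    exact absurd (hj.trans hj') (lt_irrefl _)
  rw [← h0, hsplit, Finset.card_union_of_disjoint hdisj]; rfl

lemma step_aux {n : ℕ} (σ τ : Equiv.Perm (Fin n)) (i : Fin n)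
    (hr : rCount σ i = rCount τ i) (hlt : ∀ j, j < i → σ j = τ j) : ¬ σ i < τ i := by
  intro hst
  set A := Finset.univ.filter (fun j : Fin n => j < i ∧ σ j < σ i) with hA
  set B := Finset.univ.filter (fun j : Fin n => j < i ∧ τ j < τ i) with hB
  have hAB : A ⊆ B := by
    intro j hj
    simp only [hA, hB, mem_filter, mem_univ, true_and] at *
    exact ⟨hj.1, by rw [← hlt j hj.1]; exact hj.2.trans hst⟩
  have h1 : (σ i : ℕ) = A.card + rCount σ i := key_identity σ i
  have h2 : (τ i : ℕ) = B.card + rCount τ i := key_identity τ i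
  have hcard : (B \ A).card + A.card = B.card := Finset.card_sdiff_add_card_eq_card hAB
  have hle : (B \ A).card ≤ (Finset.Ioo (σ i) (τ i)).card := by
    apply Finset.card_le_card_of_injOn (fun j => σ j)
    · intro j hj
      simp only [Finset.mem_coe, mem_sdiff, hA, hB, mem_filter, mem_univ, true_and, not_and] at hj
      obtain ⟨⟨hji, hτ⟩, hnA⟩ := hj
      have h3 : ¬ σ j < σ i := fun h => hnA hji h
      have h4 : σ j ≠ σ i := fun h => absurd (σ.injective h) (ne_of_lt hji)
      have h5 : σ i < σ j := lt_of_le_of_ne (not_lt.mp h3) (Ne.symm h4)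
      rw [Finset.mem_coe, Finset.mem_Ioo]; beta_reduce
      exact ⟨h5, by rw [hlt j hji]; exact hτ⟩
    · intro a _ b _ h; exact σ.injective h
  rw [Fin.card_Ioo] at hle
  have hlt' : (σ i : ℕ) < (τ i : ℕ) := hst
  omega

lemma code_inj {n : ℕ} (σ τ : Equiv.Perm (Fin n)) (h : ∀ i, rCount σ i = rCount τ i) :
    σ = τ := by
  have main : ∀ m : ℕ, ∀ i : Fin n, (i : ℕ) = m → σ i = τ i := by
    intro m
    induction m using Nat.strong_induction_on with
    | _ m ih =>
      intro i hi
      have hlt : ∀ j, j < i → σ j = τ j := fun j hj => ih j (by omega) j rfl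
      have h1 := step_aux σ τ i (h i) hlt
      have h2 := step_aux τ σ i (h i).symm (fun j hj => (hlt j hj).symm)
      exact le_antisymm (not_lt.mp h2) (not_lt.mp h1)
  exact Equiv.ext fun i => main i i rfl

section Swap
variable {n : ℕ} (σ : Equiv.Perm (Fin n)) (i0 j0 : Fin n)
variable (hij : i0 < j0) (hv : σ i0 < σ j0)
variable (hmin : ∀ j, i0 < j → σ i0 < σ j → σ j0 ≤ σ j)

include hij hv hmin in
lemma swap_rCount_at : rCount (σ * Equiv.swap i0 j0) i0 = rCount σ i0 + 1 := by
  have key : Finset.univ.filter (fun j : Fin n => i0 < j ∧ (σ * Equiv.swap i0 j0) j < (σ * Equiv.swap i0 j0) i0)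
      = insert j0 (Finset.univ.filter (fun j : Fin n => i0 < j ∧ σ j < σ i0)) := by
    ext j
    simp only [mem_insert, mem_filter, mem_univ, true_and, Equiv.Perm.mul_apply,
      Equiv.swap_apply_left]
    by_cases hj : j = j0
    · subst hj
      simp [Equiv.swap_apply_right, hij, hv]
    · by_cases hj' : j = i0
      · subst hj'
        simp only [lt_irrefl, false_and, false_iff, not_or, Equiv.swap_apply_left]
        exact ⟨ne_of_lt hij, not_false⟩
      · rw [Equiv.swap_apply_of_ne_of_ne hj' hj]
        constructor
        · rintro ⟨h1, h2⟩
          refine Or.inr ⟨h1, ?_⟩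
          rcases lt_trichotomy (σ j) (σ i0) with h | h | h
          · exact h
          · exact absurd (σ.injective h) hj'
          · exact absurd (hmin j h1 h) (not_le.mpr h2)
        · rintro (h | ⟨h1, h2⟩)
          · exact absurd h hj
          · exact ⟨h1, h2.trans hv⟩
  rw [rCount, key, Finset.card_insert_of_notMem]
  · rfl
  · simp only [mem_filter, mem_univ, true_and, not_and]
    intro _
    exact not_lt.mpr (le_of_lt hv)

include hij hv hmin in
lemma swap_rCount_ne (i : Fin n) (hi : i ≠ i0) :
    rCount (σ * Equiv.swap i0 j0) i = rCount σ i := by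
  rcases lt_or_gt_of_ne hi with hlt | hgt
  · -- i < i0 : bijection via swap
    have hsi : Equiv.swap i0 j0 i = i :=
      Equiv.swap_apply_of_ne_of_ne (ne_of_lt hlt) (ne_of_lt (hlt.trans hij))
    apply Finset.card_bij (fun j _ => Equiv.swap i0 j0 j)
    · intro j hj
      simp only [mem_filter, mem_univ, true_and] at hj ⊢
      simp only [Equiv.Perm.mul_apply] at hj ⊢
      refine ⟨?_, ?_⟩
      · rcases hj with ⟨h1, _⟩
        by_cases h : j = i0
        · subst h; rw [Equiv.swap_apply_left]; exact hlt.trans hij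
        · by_cases h' : j = j0
          · subst h'; rw [Equiv.swap_apply_right]; exact hlt
          · rw [Equiv.swap_apply_of_ne_of_ne h h']; exact h1
      · rw [hsi] at hj
        exact hj.2
    · intro a _ b _ h; exact (Equiv.swap i0 j0).injective h
    · intro b hb
      simp only [mem_filter, mem_univ, true_and] at hb
      refine ⟨Equiv.swap i0 j0 b, ?_, by simp⟩
      simp only [mem_filter, mem_univ, true_and, Equiv.Perm.mul_apply, Equiv.swap_apply_self,
        hsi]
      refine ⟨?_, hb.2⟩
      by_cases h : b = i0
      · subst h; rw [Equiv.swap_apply_left]; exact hlt.trans hij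
      · by_cases h' : b = j0
        · subst h'; rw [Equiv.swap_apply_right]; exact hlt
        · rw [Equiv.swap_apply_of_ne_of_ne h h']; exact hb.1
  · -- i0 < i
    by_cases hij0 : i = j0
    · subst hij0
      unfold rCount
      congr 1
      ext j
      simp only [mem_filter, mem_univ, true_and, Equiv.Perm.mul_apply, Equiv.swap_apply_right]
      constructor
      · rintro ⟨h1, h2⟩
        have hji0 : j ≠ i0 := ne_of_gt (hij.trans h1)
        have hjj0 : j ≠ i := ne_of_gt h1
        rw [Equiv.swap_apply_of_ne_of_ne hji0 hjj0] at h2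
        exact ⟨h1, h2.trans hv⟩
      · rintro ⟨h1, h2⟩
        have hji0 : j ≠ i0 := ne_of_gt (hij.trans h1)
        have hjj0 : j ≠ i := ne_of_gt h1
        rw [Equiv.swap_apply_of_ne_of_ne hji0 hjj0]
        refine ⟨h1, ?_⟩
        rcases lt_trichotomy (σ j) (σ i0) with h | h | h
        · exact h
        · exact absurd (σ.injective h) hji0
        · exact absurd (hmin j (hij.trans h1) h) (not_le.mpr h2)
    · -- i0 < i, i ≠ j0
      unfold rCount
      congr 1
      ext j
      have hii0 : i ≠ i0 := hi
      simp only [mem_filter, mem_univ, true_and]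
      simp only [Equiv.Perm.mul_apply]
      rw [Equiv.swap_apply_of_ne_of_ne hii0 hij0]
      by_cases hj : j = j0
      · subst hj
        rw [Equiv.swap_apply_right]
        constructor
        · rintro ⟨h1, h2⟩
          refine ⟨h1, ?_⟩
          have := hmin i hgt h2
          exact lt_of_le_of_ne this (fun h => hij0 (σ.injective h).symm)
        · rintro ⟨h1, h2⟩
          exact ⟨h1, hv.trans h2⟩
      · by_cases hj' : j = i0
        · subst hj'
          constructor
          · rintro ⟨h1, _⟩; exact absurd h1 (not_lt.mpr (le_of_lt hgt))
          · rintro ⟨h1, _⟩; exact absurd h1 (not_lt.mpr (le_of_lt hgt))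
        · rw [Equiv.swap_apply_of_ne_of_ne hj' hj]
end Swap


/-- If `σ'` has the same right-inversion counts as `σ` except `r_{i₀}(σ') = r_{i₀}(σ) + 1`,
then `σ'` is obtained from `σ` by swapping the values at positions `i₀` and `j₀`, where
`σ(j₀) = min{σ(j) : j > i₀, σ(j) > σ(i₀)}`. -/
theorem single_rightCount_increment_is_swap (n : ℕ) (σ σ' : Equiv.Perm (Fin n))
    (i0 : Fin n) (h1 : rCount σ' i0 = rCount σ i0 + 1)
    (h2 : ∀ i, i ≠ i0 → rCount σ' i = rCount σ i) :
    ∃ j0 : Fin n, i0 < j0 ∧ σ i0 < σ j0 ∧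
      (∀ j, i0 < j → σ i0 < σ j → σ j0 ≤ σ j) ∧
      σ' = σ * Equiv.swap i0 j0 := by
  -- the set of candidates is nonempty
  set S := Finset.univ.filter (fun j : Fin n => i0 < j ∧ σ i0 < σ j) with hS
  have hSne : S.Nonempty := by
    by_contra hempty
    rw [Finset.not_nonempty_iff_eq_empty] at hempty
    have hall : ∀ j : Fin n, i0 < j → σ j < σ i0 := by
      intro j hj
      have hjS : j ∉ S := by rw [hempty]; exact Finset.notMem_empty j
      simp only [hS, Finset.mem_filter, Finset.mem_univ, true_and, not_and, not_lt] at hjS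
      have := hjS hj
      exact lt_of_le_of_ne this (fun h => absurd (σ.injective h) (ne_of_gt hj))
    have heq : Finset.univ.filter (fun j : Fin n => i0 < j ∧ σ j < σ i0)
        = Finset.univ.filter (fun j : Fin n => i0 < j) := by
      ext j
      simp only [Finset.mem_filter, Finset.mem_univ, true_and]
      exact ⟨fun h => h.1, fun h => ⟨h, hall j h⟩⟩
    have hle : rCount σ' i0 ≤ (Finset.univ.filter (fun j : Fin n => i0 < j)).card :=
      Finset.card_le_card (fun j hj => by
        simp only [Finset.mem_filter, Finset.mem_univ, true_and] at hj ⊢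
        exact hj.1)
    rw [h1, rCount, heq] at hle
    omega
  obtain ⟨j0, hj0S, hj0min⟩ := Finset.exists_min_image S (fun j => σ j) hSne
  simp only [hS, Finset.mem_filter, Finset.mem_univ, true_and] at hj0S
  obtain ⟨hij, hv⟩ := hj0S
  have hmin : ∀ j, i0 < j → σ i0 < σ j → σ j0 ≤ σ j := fun j hj hj' =>
    hj0min j (by simp [hS, hj, hj'])
  refine ⟨j0, hij, hv, hmin, ?_⟩
  apply code_inj
  intro i
  by_cases hi : i = i0
  · subst hi
    rw [h1, swap_rCount_at σ i j0 hij hv hmin]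
  · rw [h2 i hi, swap_rCount_ne σ i0 j0 hij hv hmin i hi]
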